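/- Let m ≥ 1, n ≥ m and N > n. Let μ_1, …, μ_n ∈ ℂ and let c ∈ ℂ^{m+1} be the coefficient vector of the monic polynomial c(z) = ∏_{i=1}^m (z − μ_i). For any x_1, …, x_n ∈ ℂ, the vector ŷ = Σ_{i=1}^n x_i v_N(μ_i) ∈ ℂ^N satisfies T_{N−m}(c) ŷ = Σ_{i=m+1}^n x_i c(μ_i) v_{N−m}(μ_i). In particular, prefiltering by T_{N−m}(c) annihilates the components associated with the fixed poles μ_1, …, μ_m, so that the filtered model-compliant data are determined solely by the remaining poles μ_{m+1}, …, μ_n. -/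
import Mathlib


open Matrix

/-- Banded Toeplitz matrix `T_k(a)` of a coefficient vector `a = (a_n, …, a_1, a_0)`:
entry `(i,j)` equals the coefficient `a_{n-(j-i)}` (vector component `j - i`, since
component `t` of the vector is the coefficient `a_{n-t}`) when `0 ≤ j - i ≤ n`, else `0`.
The number of columns is passed explicitly (intended: `N = k + n`). -/
def toep {R : Type*} [Semiring R] (k N n : ℕ) (a : Fin (n + 1) → R) :
    Matrix (Fin k) (Fin N) R :=
  Matrix.of fun i j =>
    if h : i.val ≤ j.val ∧ j.val - i.val ≤ n then a ⟨j.val - i.val, by omega⟩ else 0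

/-- Hankel matrix `H_q(y) ∈ R^{(N-q) × (q+1)}` with entries `(H_q(y))_{i,j} = y_{i+j}` (0-based). -/
def hank {R : Type*} [Semiring R] (N q : ℕ) (y : Fin N → R) :
    Matrix (Fin (N - q)) (Fin (q + 1)) R :=
  Matrix.of fun i j => y ⟨i.val + j.val, by have hi := i.isLt; have hj := j.isLt; omega⟩

/-- Convolution of coefficient vectors: `(c ⋆ b)_k = Σ_{i+j=k} c_i b_j`. -/
def convVec {R : Type*} [Semiring R] (m q : ℕ) (c : Fin (m + 1) → R) (b : Fin (q + 1) → R) :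
    Fin (m + q + 1) → R :=
  fun k => ∑ i : Fin (m + 1), ∑ j : Fin (q + 1), if i.val + j.val = k.val then c i * b j else 0

/-- Prefiltering by `T_{N-m}(c)`, where `c` is the coefficient vector of the monic
polynomial `c(z) = ∏_{i=1}^m (z - μ_i)` (entry `j` of `c` being the coefficient of
`z^j`), annihilates the components associated with the fixed poles `μ_1, …, μ_m`:
`T_{N-m}(c) (∑_{i=1}^n x_i v_N(μ_i)) = ∑_{i=m+1}^n x_i c(μ_i) v_{N-m}(μ_i)`, so the
filtered data are determined solely by the remaining poles. -/
lemma toep_mulVec_vand (m N : ℕ) (hmN : m < N) (μ : ℂ) (c : Fin (m + 1) → ℂ)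
    (t : Fin (N - m)) :
    (toep (N - m) N m c *ᵥ fun j : Fin N => μ ^ (j : ℕ)) t
      = (∑ s : Fin (m + 1), c s * μ ^ (s : ℕ)) * μ ^ (t : ℕ) := by
  have ht : (t : ℕ) + m < N := by have := t.isLt; omega
  simp only [mulVec, dotProduct, toep, Matrix.of_apply]
  rw [Finset.sum_mul]
  symm
  refine Finset.sum_of_injOn (fun s : Fin (m + 1) => (⟨(t : ℕ) + (s : ℕ), by omega⟩ : Fin N))
    ?_ ?_ ?_ ?_
  · intro a _ b _ hab
    have : (t : ℕ) + a = (t : ℕ) + b := congrArg Fin.val hab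
    exact Fin.ext (by omega)
  · intro a _; exact Finset.mem_coe.mpr (Finset.mem_univ _)
  · intro j _ hj
    rw [dif_neg]
    · ring
    rintro ⟨h1, h2⟩
    exact hj ⟨⟨j.val - t.val, by omega⟩, by simp, Fin.ext (by simp; omega)⟩
  · intro s _
    dsimp only
    rw [dif_pos ⟨by omega, by simp; omega⟩]
    have h1 : ((t : ℕ) + (s : ℕ)) - (t : ℕ) = (s : ℕ) := by omega
    have : c ⟨(t : ℕ) + (s : ℕ) - (t : ℕ), by omega⟩ = c s := by
      congr 1; exact Fin.ext h1
    rw [this, pow_add]; ring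

theorem stmt14 (m n N : ℕ) (hm : 1 ≤ m) (hmn : m ≤ n) (hN : n < N)
    (μ : Fin n → ℂ) (c : Fin (m + 1) → ℂ)
    (hc : ∀ j : Fin (m + 1),
      c j = (∏ i : Fin m,
        (Polynomial.X - Polynomial.C (μ ⟨i, lt_of_lt_of_le i.isLt hmn⟩))).coeff (j : ℕ))
    (x : Fin n → ℂ) :
    toep (N - m) N m c *ᵥ (∑ i, x i • (fun t : Fin N => (μ i) ^ (t : ℕ))) =
      ∑ i : Fin n,
        (if m ≤ (i : ℕ) then x i * (∑ j : Fin (m + 1), c j * (μ i) ^ (j : ℕ)) else 0) •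
          (fun t : Fin (N - m) => (μ i) ^ (t : ℕ)) := by
  have hmN : m < N := lt_of_le_of_lt hmn hN
  have hsum : ∀ i : Fin n, (toep (N - m) N m c *ᵥ fun t : Fin N => μ i ^ (t : ℕ))
      = (∑ s : Fin (m + 1), c s * μ i ^ (s : ℕ)) • (fun t : Fin (N - m) => μ i ^ (t : ℕ)) := by
    intro i; funext t
    rw [toep_mulVec_vand m N hmN]
    simp [smul_eq_mul]
  rw [show toep (N - m) N m c *ᵥ (∑ i, x i • (fun t : Fin N => (μ i) ^ (t : ℕ)))
      = (toep (N - m) N m c).mulVecLin (∑ i, x i • (fun t : Fin N => (μ i) ^ (t : ℕ))) from rfl,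
    map_sum]
  refine Finset.sum_congr rfl fun i _ => ?_
  rw [_root_.map_smul, Matrix.mulVecLin_apply, hsum i]
  by_cases him : m ≤ (i : ℕ)
  · rw [if_pos him, smul_smul]
  · rw [if_neg him]
    have hS : (∑ s : Fin (m + 1), c s * μ i ^ (s : ℕ)) = 0 := by
      set P : Polynomial ℂ :=
        ∏ k : Fin m, (Polynomial.X - Polynomial.C (μ ⟨k, lt_of_lt_of_le k.isLt hmn⟩)) with hP
      have hdeg : P.natDegree = m := by
        rw [hP, Polynomial.natDegree_prod]
        · simp [Polynomial.natDegree_X_sub_C]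
        · intro k _; exact Polynomial.X_sub_C_ne_zero _
      have h1 : (∑ s : Fin (m + 1), c s * μ i ^ (s : ℕ))
          = ∑ s ∈ Finset.range (m + 1), P.coeff s * μ i ^ s := by
        rw [← Fin.sum_univ_eq_sum_range (fun s => P.coeff s * μ i ^ s) (m + 1)]
        exact Finset.sum_congr rfl fun s _ => by rw [hc s]
      rw [h1, ← hdeg, ← Polynomial.eval_eq_sum_range]
      rw [hP, Polynomial.eval_prod]
      refine Finset.prod_eq_zero (Finset.mem_univ (⟨(i : ℕ), by omega⟩ : Fin m)) ?_
      have : μ ⟨(i : ℕ), by omega⟩ = μ i := by congr 1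
      simp [this]
    rw [hS]; simp
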